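/- arXiv:1606.04868 — 2 statements merged into one kernel-verified Lean document; each statement's English description precedes it below -/
import Mathlib

section
/- The monomials φ_n(x) = x^n, n ∈ ℕ₀, in L²(0,1) have Gramian equal to the Hilbert matrix G_{nm} = 1/(n+m+1), and satisfy the upper frame (Bessel) bound Σ_{n=0}^∞ |∫₀¹ f(x) x^n dx|² ≤ π ∫₀¹ |f(x)|² dx for all f ∈ L²(0,1). -/
open MeasureTheory Finset

/-! ### Auxiliary lemmas -/

noncomputable def BB (c : ℝ) (m : ℕ) : ℝ :=
  2/Real.sqrt c * Real.arctan (Real.sqrt ((m:ℝ)-1/2) / Real.sqrt c)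

lemma hasDerivAt_G {c : ℝ} (hc : 0 < c) {t : ℝ} (ht : 0 < t) :
    HasDerivAt (fun s => 2/Real.sqrt c * Real.arctan (Real.sqrt s / Real.sqrt c))
      (1/((c+t)*Real.sqrt t)) t := by
  have hsc : 0 < Real.sqrt c := Real.sqrt_pos.2 hc
  have hst : 0 < Real.sqrt t := Real.sqrt_pos.2 ht
  have h1 : HasDerivAt Real.sqrt (1/(2*Real.sqrt t)) t := Real.hasDerivAt_sqrt (ne_of_gt ht)
  have h2 : HasDerivAt (fun s => Real.sqrt s / Real.sqrt c) ((1/(2*Real.sqrt t))/Real.sqrt c) t :=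
    h1.div_const _
  have h3 := (Real.hasDerivAt_arctan (Real.sqrt t / Real.sqrt c)).comp t h2
  have h4 := h3.const_mul (2/Real.sqrt c)
  refine h4.congr_deriv ?_
  symm
  have hne : 1 + (Real.sqrt t / Real.sqrt c)^2 ≠ 0 := by positivity
  field_simp
  linear_combination Real.sq_sqrt hc.le + Real.sq_sqrt ht.le

lemma arctan_lower {u : ℝ} (hu : 0 ≤ u) : u/(1+u^2) ≤ Real.arctan u := by
  rcases eq_or_lt_of_le hu with h|h
  · simp [← h]
  obtain ⟨ξ, hξ, hslope⟩ := exists_hasDerivAt_eq_slope Real.arctan (fun x => 1/(1+x^2)) h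
    (Real.continuous_arctan.continuousOn)
    (fun x _ => Real.hasDerivAt_arctan x)
  rw [Real.arctan_zero, sub_zero, sub_zero] at hslope
  have h1 : 1/(1+u^2) ≤ 1/(1+ξ^2) := by
    apply one_div_le_one_div_of_le (by positivity)
    nlinarith [hξ.1.le, hξ.2.le]
  calc u/(1+u^2) = (1/(1+u^2)) * u := by ring
    _ ≤ (1/(1+ξ^2)) * u := mul_le_mul_of_nonneg_right h1 h.le
    _ = Real.arctan u := by rw [hslope]; field_simp

lemma g_anti {c x y : ℝ} (hc : 0 < c) (hx : 0 < x) (hxy : x ≤ y) :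
    1/((c+y)*Real.sqrt y) ≤ 1/((c+x)*Real.sqrt x) := by
  apply one_div_le_one_div_of_le (by positivity)
  have h1 := Real.sqrt_le_sqrt hxy
  have h2 : (0:ℝ) < Real.sqrt x := Real.sqrt_pos.2 hx
  gcongr
  linarith

lemma term_le0 {c : ℝ} (hc : 0 < c) :
    1/((c+(0:ℕ)+1/2)*Real.sqrt (((0:ℕ):ℝ)+1/2)) ≤ BB c 1 - BB c 0 := by
  have hsc : 0 < Real.sqrt c := Real.sqrt_pos.2 hc
  have hB0 : BB c 0 = 0 := by
    unfold BB
    norm_num [Real.sqrt_eq_zero']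
  have hB1 : BB c 1 = 2/Real.sqrt c * Real.arctan (Real.sqrt (1/2) / Real.sqrt c) := by
    norm_num [BB]
  rw [hB0, hB1, sub_zero]
  set u := Real.sqrt (1/2) / Real.sqrt c with hu
  have hu0 : 0 ≤ u := by positivity
  have h := arctan_lower hu0
  have husq : u^2 = (1/2)/c := by
    rw [hu, div_pow, Real.sq_sqrt (by norm_num), Real.sq_sqrt hc.le]
  have hs2 : (0:ℝ) < Real.sqrt (1/2) := by positivity
  have key : 1/((c+(0:ℕ)+1/2)*Real.sqrt (((0:ℕ):ℝ)+1/2)) = 2/Real.sqrt c * (u/(1+u^2)) := by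
    push_cast
    rw [husq, hu]
    norm_num
    field_simp
    ring_nf
    linear_combination (Real.sqrt 2)^2 * Real.sq_sqrt hc.le
      + c * Real.sq_sqrt (show (0:ℝ)≤2 by norm_num)
  rw [key]
  exact mul_le_mul_of_nonneg_left h (div_nonneg (by norm_num) hsc.le)

lemma term_le1 {c : ℝ} (hc : 0 < c) (k : ℕ) :
    1/((c+((k+1:ℕ):ℝ)+1/2)*Real.sqrt (((k+1:ℕ):ℝ)+1/2)) ≤ BB c (k+2) - BB c (k+1) := by
  have hsc : 0 < Real.sqrt c := Real.sqrt_pos.2 hc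
  set G : ℝ → ℝ := fun s => 2/Real.sqrt c * Real.arctan (Real.sqrt s / Real.sqrt c) with hG
  set a : ℝ := ((k+1:ℕ):ℝ) - 1/2 with ha
  set b : ℝ := ((k+1:ℕ):ℝ) + 1/2 with hb
  have hab : a < b := by rw [ha, hb]; push_cast; linarith
  have ha0 : 0 < a := by rw [ha]; push_cast; linarith [Nat.cast_nonneg (α := ℝ) k]
  have hcont : ContinuousOn G (Set.Icc a b) :=
    (continuous_const.mul (Real.continuous_arctan.comp
      ((Real.continuous_sqrt).div_const _))).continuousOn
  obtain ⟨ξ, hξ, hslope⟩ := exists_hasDerivAt_eq_slope G (fun t => 1/((c+t)*Real.sqrt t)) hab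
    hcont (fun x hx => hasDerivAt_G hc (lt_trans ha0 hx.1))
  have hba : b - a = 1 := by rw [ha, hb]; ring
  have hBa : BB c (k+1) = G a := by rw [BB, hG, ha]
  have hBb : BB c (k+2) = G b := by rw [BB, hG, hb]; try push_cast; try ring_nf
  have heq : BB c (k+2) - BB c (k+1) = 1/((c+ξ)*Real.sqrt ξ) := by
    rw [hBa, hBb, hslope, hba, div_one]
  rw [heq]
  have h2 : 1/((c+((k+1:ℕ):ℝ)+1/2)*Real.sqrt (((k+1:ℕ):ℝ)+1/2)) = 1/((c+b)*Real.sqrt b) := by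
    rw [hb]; ring_nf
  rw [h2]
  exact g_anti hc (lt_trans ha0 hξ.1) hξ.2.le

lemma key_sum {c : ℝ} (hc : 0 < c) (N : ℕ) :
    ∑ m ∈ Finset.range N, 1/((c+(m:ℝ)+1/2)*Real.sqrt ((m:ℝ)+1/2)) ≤ Real.pi / Real.sqrt c := by
  have hsc : 0 < Real.sqrt c := Real.sqrt_pos.2 hc
  have h1 : ∑ m ∈ Finset.range N, 1/((c+(m:ℝ)+1/2)*Real.sqrt ((m:ℝ)+1/2))
      ≤ ∑ m ∈ Finset.range N, (BB c (m+1) - BB c m) := by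
    apply Finset.sum_le_sum
    intro m _
    cases m with
    | zero => exact term_le0 hc
    | succ k => exact term_le1 hc k
  rw [Finset.sum_range_sub (BB c)] at h1
  have hB0 : BB c 0 = 0 := by unfold BB; norm_num [Real.sqrt_eq_zero']
  have hBN : BB c N ≤ Real.pi / Real.sqrt c := by
    unfold BB
    have := (Real.arctan_lt_pi_div_two (Real.sqrt ((N:ℝ)-1/2) / Real.sqrt c)).le
    calc 2/Real.sqrt c * Real.arctan (Real.sqrt ((N:ℝ)-1/2) / Real.sqrt c)
        ≤ 2/Real.sqrt c * (Real.pi/2) := mul_le_mul_of_nonneg_left this (by positivity)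
      _ = Real.pi / Real.sqrt c := by ring
  linarith

noncomputable def w (k : ℕ) : ℝ := Real.sqrt ((k:ℝ)+1/2)

lemma w_pos (k : ℕ) : 0 < w k := Real.sqrt_pos.2 (by positivity)

lemma inner_sum_le (n : ℕ) (N : ℕ) :
    ∑ m ∈ Finset.range N, (w n / w m) / ((n:ℝ)+(m:ℝ)+1) ≤ Real.pi := by
  have hc : (0:ℝ) < (n:ℝ)+1/2 := by positivity
  have := key_sum hc N
  calc ∑ m ∈ Finset.range N, (w n / w m) / ((n:ℝ)+(m:ℝ)+1)
      = w n * ∑ m ∈ Finset.range N, 1/((((n:ℝ)+1/2)+(m:ℝ)+1/2)*Real.sqrt ((m:ℝ)+1/2)) := by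
        rw [Finset.mul_sum]
        apply Finset.sum_congr rfl
        intro m _
        rw [w, w]
        have h1 : ((n:ℝ)+1/2)+(m:ℝ)+1/2 = (n:ℝ)+(m:ℝ)+1 := by ring
        rw [h1]
        field_simp
    _ ≤ w n * (Real.pi / Real.sqrt ((n:ℝ)+1/2)) :=
        mul_le_mul_of_nonneg_left this (w_pos n).le
    _ = Real.pi := by
        rw [w]
        field_simp

lemma hilbert_finite (a : ℕ → ℝ) (N : ℕ) :
    ∑ n ∈ Finset.range N, ∑ m ∈ Finset.range N, a n * a m / ((n:ℝ)+(m:ℝ)+1)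
      ≤ Real.pi * ∑ n ∈ Finset.range N, (a n)^2 := by
  have pointwise : ∀ n m : ℕ, a n * a m / ((n:ℝ)+(m:ℝ)+1)
      ≤ ((a n)^2 * ((w n / w m) / ((n:ℝ)+(m:ℝ)+1))
          + (a m)^2 * ((w m / w n) / ((n:ℝ)+(m:ℝ)+1))) / 2 := by
    intro n m
    have hd : (0:ℝ) < (n:ℝ)+(m:ℝ)+1 := by positivity
    have hp : 0 < w n / w m := div_pos (w_pos n) (w_pos m)
    set p := w n / w m with hpdef
    have hwmn : w m / w n = p⁻¹ := by rw [hpdef]; field_simp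
    rw [hwmn]
    have hinv : p⁻¹ * p = 1 := inv_mul_cancel₀ hp.ne'
    rw [div_le_div_iff₀ hd (by norm_num), ← sub_nonneg]
    have expand : ((a n)^2 * (p / ((n:ℝ)+(m:ℝ)+1)) + (a m)^2 * (p⁻¹ / ((n:ℝ)+(m:ℝ)+1)))
        * ((n:ℝ)+(m:ℝ)+1) = (a n)^2 * p + (a m)^2 * p⁻¹ := by
      field_simp
    rw [expand]
    have h2 : 0 ≤ (p * a n - a m)^2 := sq_nonneg _
    have h3 : 0 ≤ ((a n)^2 * p + (a m)^2 * p⁻¹ - a n * a m * 2) * p := by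
      have : ((a n)^2 * p + (a m)^2 * p⁻¹ - a n * a m * 2) * p
          = (p * a n - a m)^2 + (a m)^2 * (p⁻¹ * p - 1) := by ring
      rw [this, hinv]
      simpa using h2
    nlinarith [hp]
  calc ∑ n ∈ Finset.range N, ∑ m ∈ Finset.range N, a n * a m / ((n:ℝ)+(m:ℝ)+1)
      ≤ ∑ n ∈ Finset.range N, ∑ m ∈ Finset.range N,
          ((a n)^2 * ((w n / w m) / ((n:ℝ)+(m:ℝ)+1))
            + (a m)^2 * ((w m / w n) / ((n:ℝ)+(m:ℝ)+1))) / 2 :=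
        Finset.sum_le_sum (fun n _ => Finset.sum_le_sum (fun m _ => pointwise n m))
    _ = ∑ n ∈ Finset.range N, ∑ m ∈ Finset.range N,
          (a n)^2 * ((w n / w m) / ((n:ℝ)+(m:ℝ)+1)) := by
        have swap : ∑ n ∈ Finset.range N, ∑ m ∈ Finset.range N,
            (a m)^2 * ((w m / w n) / ((n:ℝ)+(m:ℝ)+1))
            = ∑ n ∈ Finset.range N, ∑ m ∈ Finset.range N,
            (a n)^2 * ((w n / w m) / ((n:ℝ)+(m:ℝ)+1)) := by
          rw [Finset.sum_comm]
          apply Finset.sum_congr rfl; intro n _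
          apply Finset.sum_congr rfl; intro m _
          ring_nf
        simp_rw [← Finset.sum_div, Finset.sum_add_distrib, swap]
        ring
    _ = ∑ n ∈ Finset.range N, (a n)^2 *
          (∑ m ∈ Finset.range N, (w n / w m) / ((n:ℝ)+(m:ℝ)+1)) := by
        simp_rw [Finset.mul_sum]
    _ ≤ ∑ n ∈ Finset.range N, (a n)^2 * Real.pi :=
        Finset.sum_le_sum (fun n _ => mul_le_mul_of_nonneg_left (inner_sum_le n N) (sq_nonneg _))
    _ = Real.pi * ∑ n ∈ Finset.range N, (a n)^2 := by
        rw [Finset.mul_sum]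
        exact Finset.sum_congr rfl (fun n _ => mul_comm _ _)

lemma cs_integral {α : Type*} [MeasurableSpace α] (μ : Measure α) (f g : α → ℝ)
    (hf2 : Integrable (fun x => f x^2) μ) (hg2 : Integrable (fun x => g x^2) μ)
    (hfg : Integrable (fun x => f x * g x) μ) :
    (∫ x, f x * g x ∂μ)^2 ≤ (∫ x, f x^2 ∂μ) * (∫ x, g x^2 ∂μ) := by
  have h : ∀ t : ℝ, 0 ≤ (∫ x, g x^2 ∂μ) * (t*t) + (2*∫ x, f x * g x ∂μ) * t + ∫ x, f x^2 ∂μ := by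
    intro t
    have expand : ∀ x, (f x + t * g x)^2 = (fun x => f x^2) x
        + ((fun x => (2*t) * (f x * g x)) x + (fun x => t^2 * g x^2) x) := by
      intro x; simp; ring
    have h0 : 0 ≤ ∫ x, (f x + t * g x)^2 ∂μ := integral_nonneg (fun x => sq_nonneg _)
    have heq : ∫ x, (f x + t * g x)^2 ∂μ
        = (∫ x, f x^2 ∂μ) + ((2*t) * (∫ x, f x * g x ∂μ) + t^2 * ∫ x, g x^2 ∂μ) := by
      rw [show (fun x => (f x + t * g x)^2)
        = fun x => f x^2 + ((2*t) * (f x * g x) + t^2 * g x^2) from funext expand]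
      have hI : Integrable (fun x => (2*t)*(f x * g x) + t^2 * g x^2) μ :=
        (hfg.const_mul (2*t)).add (hg2.const_mul (t^2))
      rw [integral_add hf2 hI,
        integral_add (hfg.const_mul (2*t)) (hg2.const_mul (t^2)),
        MeasureTheory.integral_const_mul, MeasureTheory.integral_const_mul]
    nlinarith [h0]
  have := discrim_le_zero h
  rw [discrim] at this
  nlinarith [this]

lemma gram_aux (k : ℕ) : ∫ x in Set.Ioo (0:ℝ) 1, x ^ k = 1/((k:ℝ)+1) := by
  rw [← MeasureTheory.integral_Ioc_eq_integral_Ioo,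
    ← intervalIntegral.integral_of_le (by norm_num : (0:ℝ) ≤ 1)]
  rw [integral_pow]
  simp

/-- the monomials x^n in L²(0,1) have Gramian the Hilbert matrix
1/(n+m+1), and satisfy the Bessel bound with constant π (Hilbert's inequality). -/
theorem monomials_hilbert_matrix_and_bessel :
    (∀ n m : ℕ,
      ∫ x in Set.Ioo (0:ℝ) 1, x ^ (n + m) = 1 / ((n : ℝ) + (m : ℝ) + 1)) ∧
    (∀ f : ℝ → ℝ, MemLp f 2 (volume.restrict (Set.Ioo (0:ℝ) 1)) →
      ∑' n : ℕ, (∫ x in Set.Ioo (0:ℝ) 1, f x * x ^ n) ^ 2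
        ≤ Real.pi * ∫ x in Set.Ioo (0:ℝ) 1, (f x) ^ 2) := by
  constructor
  · intro n m
    rw [gram_aux (n+m)]
    push_cast
    ring_nf
  intro f hf
  set μ := volume.restrict (Set.Ioo (0:ℝ) 1) with hμ
  haveI hfin : IsFiniteMeasure μ := by
    constructor
    rw [hμ, Measure.restrict_apply_univ]
    simp [Real.volume_Ioo]
  -- basic integrability facts
  have hpow_mem : ∀ k : ℕ, MemLp (fun x : ℝ => x^k) 2 μ := by
    intro k
    apply MemLp.mono_exponent (q := ⊤) _ le_top
    apply memLp_top_of_bound (continuous_pow k).aestronglyMeasurable 1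
    rw [hμ]
    rw [ae_restrict_iff' measurableSet_Ioo]
    filter_upwards with x hx
    rw [Real.norm_eq_abs, abs_pow]
    calc |x|^k ≤ 1^k := pow_le_pow_left₀ (abs_nonneg x) (by rw [abs_le]; constructor <;> nlinarith [hx.1, hx.2]) k
      _ = 1 := one_pow k
  have hf_sq : Integrable (fun x => f x ^ 2) μ := hf.integrable_sq
  have hf_pow : ∀ k : ℕ, Integrable (fun x => f x * x^k) μ := by
    intro k
    have h1 : MemLp ((fun x : ℝ => x^k) • f) 1 μ :=
      hf.smul (hpow_mem k) (hpqr := ⟨by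
        rw [inv_one, ← two_mul, ENNReal.mul_inv_cancel (by norm_num) (by norm_num)]⟩)
    have h2 := memLp_one_iff_integrable.mp h1
    apply h2.congr
    filter_upwards with x
    simp [Pi.smul_apply, smul_eq_mul, mul_comm]
  have hpow_int : ∀ k : ℕ, Integrable (fun x : ℝ => x^k) μ :=
    fun k => memLp_one_iff_integrable.mp ((hpow_mem k).mono_exponent (by norm_num))
  set c : ℕ → ℝ := fun n => ∫ x, f x * x ^ n ∂μ with hc
  have hI0 : 0 ≤ ∫ x, f x ^ 2 ∂μ := integral_nonneg (fun x => sq_nonneg _)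
  -- partial sum bound
  have partial_bound : ∀ N : ℕ, ∑ n ∈ Finset.range N, (c n)^2 ≤ Real.pi * ∫ x, f x ^2 ∂μ := by
    intro N
    set P : ℝ → ℝ := fun x => ∑ n ∈ Finset.range N, c n * x^n with hP
    have hfP_eq : (fun x => f x * P x) = fun x => ∑ n ∈ Finset.range N, c n * (f x * x^n) := by
      funext x
      rw [hP, Finset.mul_sum]
      exact Finset.sum_congr rfl (fun n _ => by ring)
    have hfP : Integrable (fun x => f x * P x) μ := by
      rw [hfP_eq]
      exact integrable_finset_sum _ (fun n _ => (hf_pow n).const_mul (c n))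
    have hP2_eq : (fun x => P x^2)
        = fun x => ∑ n ∈ Finset.range N, ∑ m ∈ Finset.range N, (c n * c m) * x^(n+m) := by
      funext x
      rw [hP, sq, Finset.sum_mul_sum]
      exact Finset.sum_congr rfl (fun n _ => Finset.sum_congr rfl (fun m _ => by
        rw [pow_add]; ring))
    have hP2 : Integrable (fun x => P x^2) μ := by
      rw [hP2_eq]
      exact integrable_finset_sum _ (fun n _ => integrable_finset_sum _
        (fun m _ => (hpow_int (n+m)).const_mul _))
    have I1 : ∫ x, f x * P x ∂μ = ∑ n ∈ Finset.range N, (c n)^2 := by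
      rw [hfP_eq, integral_finset_sum _ (fun n _ => (hf_pow n).const_mul (c n))]
      apply Finset.sum_congr rfl
      intro n _
      rw [MeasureTheory.integral_const_mul, sq]
    have I2 : ∫ x, P x^2 ∂μ
        = ∑ n ∈ Finset.range N, ∑ m ∈ Finset.range N, c n * c m / ((n:ℝ)+(m:ℝ)+1) := by
      rw [hP2_eq, integral_finset_sum _ (fun n _ => integrable_finset_sum _
        (fun m _ => (hpow_int (n+m)).const_mul _))]
      apply Finset.sum_congr rfl
      intro n _
      rw [integral_finset_sum _ (fun m _ => (hpow_int (n+m)).const_mul _)]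
      apply Finset.sum_congr rfl
      intro m _
      rw [MeasureTheory.integral_const_mul]
      have hg : ∫ x, x^(n+m) ∂μ = 1/(((n+m:ℕ):ℝ)+1) := gram_aux (n+m)
      rw [hg]
      push_cast
      ring
    have hCS := cs_integral μ f P hf_sq hP2 hfP
    rw [I1, I2] at hCS
    have hH := hilbert_finite c N
    have hS : 0 ≤ ∑ n ∈ Finset.range N, (c n)^2 :=
      Finset.sum_nonneg (fun _ _ => sq_nonneg _)
    have hD : 0 ≤ ∑ n ∈ Finset.range N, ∑ m ∈ Finset.range N, c n * c m / ((n:ℝ)+(m:ℝ)+1) := by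
      rw [← I2]
      exact integral_nonneg (fun x => sq_nonneg _)
    rcases eq_or_lt_of_le hS with hS0|hSpos
    · rw [← hS0]
      positivity
    · have step : (∑ n ∈ Finset.range N, (c n)^2) * (∑ n ∈ Finset.range N, (c n)^2)
          ≤ (Real.pi * ∫ x, f x ^2 ∂μ) * (∑ n ∈ Finset.range N, (c n)^2) := by
        calc (∑ n ∈ Finset.range N, (c n)^2) * (∑ n ∈ Finset.range N, (c n)^2)
            ≤ (∫ x, f x^2 ∂μ) *
              (∑ n ∈ Finset.range N, ∑ m ∈ Finset.range N, c n * c m / ((n:ℝ)+(m:ℝ)+1)) := by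
              rw [← sq]; exact hCS
          _ ≤ (∫ x, f x^2 ∂μ) * (Real.pi * ∑ n ∈ Finset.range N, (c n)^2) :=
              mul_le_mul_of_nonneg_left hH hI0
          _ = (Real.pi * ∫ x, f x ^2 ∂μ) * (∑ n ∈ Finset.range N, (c n)^2) := by ring
      exact le_of_mul_le_mul_right step hSpos
  exact Real.tsum_le_of_sum_range_le (fun n => sq_nonneg _) partial_bound
end

section
/- The monomials {x^n}_{n∈ℕ₀} do not form a frame in L²(0,1): there is no constant B₁ > 0 such that B₁‖f‖² ≤ Σ_{n=0}^∞ |∫₀¹ f(x)x^n dx|² for all f ∈ L²(0,1). -/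
open MeasureTheory

/-- the monomials {x^n} are not a frame in L²(0,1): there is no
positive lower frame bound. -/
theorem monomials_no_lower_frame_bound :
    ¬ ∃ B₁ : ℝ, 0 < B₁ ∧
      ∀ f : ℝ → ℝ, MemLp f 2 (volume.restrict (Set.Ioo (0:ℝ) 1)) →
        B₁ * ∫ x in Set.Ioo (0:ℝ) 1, (f x) ^ 2
          ≤ ∑' n : ℕ, (∫ x in Set.Ioo (0:ℝ) 1, f x * x ^ n) ^ 2 := by
  rintro ⟨B, hB, h⟩
  set ε : ℝ := min (B / 4) (1 / 2) with hεdef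
  have hε0 : 0 < ε := lt_min (by linarith) (by norm_num)
  have hε1 : ε ≤ 1 / 2 := min_le_right _ _
  have hεB : ε ≤ B / 4 := min_le_left _ _
  set f : ℝ → ℝ := Set.indicator (Set.Ioo 0 ε) (fun _ => 1) with hf
  have hmeas : MeasurableSet (Set.Ioo (0:ℝ) ε) := measurableSet_Ioo
  have hsub : Set.Ioo (0:ℝ) 1 ∩ Set.Ioo 0 ε = Set.Ioo 0 ε := by
    apply Set.inter_eq_self_of_subset_right
    apply Set.Ioo_subset_Ioo le_rfl
    linarith
  have hmem : MemLp f 2 (volume.restrict (Set.Ioo (0:ℝ) 1)) := by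
    apply MeasureTheory.memLp_indicator_const 2 hmeas (1 : ℝ)
    right
    refine (measure_lt_top _ _).ne
  have hsq : (∫ x in Set.Ioo (0:ℝ) 1, (f x) ^ 2) = ε := by
    have : ∀ x, (f x) ^ 2 = Set.indicator (Set.Ioo 0 ε) (fun _ => (1:ℝ)) x := by
      intro x
      by_cases hx : x ∈ Set.Ioo (0:ℝ) ε <;> simp [hf, hx]
    simp_rw [this]
    rw [MeasureTheory.setIntegral_indicator hmeas, hsub]
    simp [Real.volume_Ioo, hε0.le]
  have hint : ∀ n : ℕ, (∫ x in Set.Ioo (0:ℝ) 1, f x * x ^ n)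
      = ε ^ (n + 1) / (n + 1) := by
    intro n
    have : ∀ x, f x * x ^ n = Set.indicator (Set.Ioo 0 ε) (fun y => y ^ n) x := by
      intro x
      by_cases hx : x ∈ Set.Ioo (0:ℝ) ε <;> simp [hf, hx]
    simp_rw [this]
    rw [MeasureTheory.setIntegral_indicator hmeas, hsub,
      ← MeasureTheory.integral_Ioc_eq_integral_Ioo,
      ← intervalIntegral.integral_of_le hε0.le, integral_pow]
    simp
  have hterm : ∀ n : ℕ, (ε ^ (n + 1) / (n + 1)) ^ 2 ≤ ε ^ 2 * (ε ^ 2) ^ n := by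
    intro n
    have h1 : (1:ℝ) ≤ (n + 1 : ℝ) := by have := n.cast_nonneg (α := ℝ); linarith
    have := div_le_self (by positivity : (0:ℝ) ≤ (ε ^ (n+1)) ^ 2)
      (by nlinarith : (1:ℝ) ≤ ((n:ℝ) + 1) ^ 2)
    calc (ε ^ (n + 1) / (n + 1)) ^ 2 = (ε ^ (n+1)) ^ 2 / ((n:ℝ)+1) ^ 2 := by
          rw [div_pow]
      _ ≤ (ε ^ (n+1)) ^ 2 := this
      _ = ε ^ 2 * (ε ^ 2) ^ n := by ring
  have hgeom : Summable (fun n : ℕ => ε ^ 2 * (ε ^ 2) ^ n) := by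
    apply Summable.mul_left
    apply summable_geometric_of_lt_one (by positivity)
    nlinarith
  have hsum : Summable (fun n : ℕ => (ε ^ (n + 1) / (n + 1)) ^ 2) := by
    apply Summable.of_nonneg_of_le (fun n => by positivity) hterm hgeom
  have htsum : (∑' n : ℕ, (ε ^ (n + 1) / (n + 1)) ^ 2) ≤ 2 * ε ^ 2 := by
    calc (∑' n : ℕ, (ε ^ (n + 1) / (n + 1)) ^ 2)
        ≤ ∑' n : ℕ, ε ^ 2 * (ε ^ 2) ^ n := Summable.tsum_le_tsum hterm hsum hgeom
      _ = ε ^ 2 * (1 - ε ^ 2)⁻¹ := by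
          rw [tsum_mul_left, tsum_geometric_of_lt_one (by positivity) (by nlinarith)]
      _ ≤ 2 * ε ^ 2 := by
          rw [mul_comm]
          apply mul_le_mul_of_nonneg_right _ (by positivity)
          rw [inv_le_iff_one_le_mul₀ (by nlinarith)]
          nlinarith
  have hmain := h f hmem
  rw [hsq] at hmain
  simp_rw [hint] at hmain
  have : B * ε ≤ 2 * ε ^ 2 := hmain.trans htsum
  nlinarith
end
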